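/- Let n ≥ 1, let ν_1 = 1 and 0 < ν_j ≤ 1 for 2 ≤ j ≤ n, and let λ_1, …, λ_{n−1} > 0 with λ_n = 1. Define f(t) = (−1)^{n−1} λ_1 ∑_{k=n−1}^∞ (−1)^k ∑_{(k_1,…,k_n) ∈ Λ^k_n} ( t^{k_1 + ∑_{j=2}^n k_j ν_j} ∏_{j=1}^{n−1} λ_j^{k_j} ) / Γ(1 + k_1 + ∑_{j=2}^n k_j ν_j) for t ≥ 0. Then for every s > 0 such that s > λ_1 and s^{ν_j} > λ_j for 2 ≤ j ≤ n−1 and s^{ν_n} > 1, ∫₀^∞ e^{−st} f(t) dt = ∏_{j=1}^{n−1} λ_j / ∏_{j=1}^n (λ_j + s^{ν_j}); that is, f is the density of the convolution W = Y_1 + ⋯ + Y_n of independent Mittag-Leffler random variables Y_j with Pr{Y_j > t} = E_{ν_j}(−λ_j t^{ν_j}). -/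

import Mathlib

open scoped BigOperators

/-- `Lambda n k` is the set of tuples `(k_1, …, k_n)` of nonnegative integers with
`k_1 + ⋯ + k_n = k` and `k_j ≥ 1` for `2 ≤ j ≤ n` (`k_1` may be `0`); the coordinate
`j : Fin n` represents the index `j + 1 ∈ {1, …, n}`. -/
def Lambda (n k : ℕ) : Finset (Fin n → ℕ) :=
  (Finset.Nat.antidiagonalTuple n k).filter
    (fun κ => ∀ j : Fin n, 1 ≤ j.val → 1 ≤ κ j)

namespace MLaux

open MeasureTheory Set

/-! ### Elementary integral lemmas -/

lemma integrableOn_exp_rpow {s a : ℝ} (hs : 0 < s) (ha : 0 ≤ a) :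
    IntegrableOn (fun t : ℝ => Real.exp (-(s * t)) * t ^ a) (Set.Ioi 0) := by
  have h0 : (0:ℝ) < 1 + a := by linarith
  have h1 : IntegrableOn (fun x : ℝ => Real.exp (-x) * x ^ a) (Set.Ioi 0) := by
    have := Real.GammaIntegral_convergent h0
    simpa using this
  have h2 : IntegrableOn (fun t : ℝ => Real.exp (-(s * t)) * (s * t) ^ a) (Set.Ioi 0) := by
    have := (MeasureTheory.integrableOn_Ioi_comp_mul_left_iff
      (fun x : ℝ => Real.exp (-x) * x ^ a) 0 hs).2 (by simpa using h1)
    simpa using this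
  have h3 : IntegrableOn (fun t : ℝ => s ^ (-a) * (Real.exp (-(s * t)) * (s * t) ^ a))
      (Set.Ioi 0) := h2.const_mul _
  refine h3.congr_fun (fun t ht => ?_) measurableSet_Ioi
  have ht0 : (0:ℝ) < t := ht
  have hsa : (0:ℝ) < s ^ a := Real.rpow_pos_of_pos hs a
  beta_reduce
  rw [Real.mul_rpow hs.le ht0.le, Real.rpow_neg hs.le]
  field_simp

lemma integral_exp_rpow {s a : ℝ} (hs : 0 < s) (ha : 0 ≤ a) :
    ∫ t in Set.Ioi (0:ℝ), Real.exp (-(s * t)) * t ^ a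
      = Real.Gamma (1 + a) * s ^ (-(1 + a)) := by
  have h0 : (0:ℝ) < 1 + a := by linarith
  have hsa : (0:ℝ) < s ^ a := Real.rpow_pos_of_pos hs a
  have hΓ : Real.Gamma (1 + a) = ∫ x in Set.Ioi (0:ℝ), Real.exp (-x) * x ^ a := by
    rw [Real.Gamma_eq_integral h0]
    norm_num
  have h1 : ∫ t in Set.Ioi (0:ℝ), Real.exp (-(s * t)) * (s * t) ^ a
      = s⁻¹ * Real.Gamma (1 + a) := by
    have h := MeasureTheory.integral_comp_mul_left_Ioi
      (fun x : ℝ => Real.exp (-x) * x ^ a) 0 hs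
    simp only [mul_zero, smul_eq_mul] at h
    rw [h, ← hΓ]
  have h2 : ∫ t in Set.Ioi (0:ℝ), Real.exp (-(s * t)) * (s * t) ^ a
      = s ^ a * ∫ t in Set.Ioi (0:ℝ), Real.exp (-(s * t)) * t ^ a := by
    rw [← MeasureTheory.integral_const_mul]
    refine MeasureTheory.setIntegral_congr_fun measurableSet_Ioi fun t ht => ?_
    have ht0 : (0:ℝ) < t := ht
    rw [Real.mul_rpow hs.le ht0.le]
    ring
  have h3 : s ^ a * ∫ t in Set.Ioi (0:ℝ), Real.exp (-(s * t)) * t ^ a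
      = s⁻¹ * Real.Gamma (1 + a) := by rw [← h2, h1]
  have hpow : s ^ (-(1 + a)) = s⁻¹ * (s ^ a)⁻¹ := by
    rw [neg_add, Real.rpow_add hs, Real.rpow_neg_one, Real.rpow_neg hs.le]
  rw [hpow]
  field_simp at h3 ⊢
  linear_combination h3

/-! ### Geometric series lemmas -/

lemma summable_norm_geom {r : ℝ} (hr : |r| < 1) : Summable fun q : ℕ => ‖r ^ q‖ := by
  simpa [Real.norm_eq_abs, abs_pow] using summable_geometric_of_lt_one (abs_nonneg r) hr

lemma summable_norm_geom_tail {r : ℝ} (hr : |r| < 1) :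
    Summable fun q : ℕ => ‖(if 1 ≤ q then r ^ q else 0 : ℝ)‖ := by
  refine Summable.of_nonneg_of_le (fun q => norm_nonneg _) (fun q => ?_)
    (summable_geometric_of_lt_one (abs_nonneg r) hr)
  by_cases h : 1 ≤ q
  · simp [h, Real.norm_eq_abs, abs_pow]
  · simp only [h, if_false, norm_zero]
    positivity

lemma tsum_geom_tail {r : ℝ} (hr : |r| < 1) :
    ∑' q : ℕ, (if 1 ≤ q then r ^ q else 0 : ℝ) = r * (1 - r)⁻¹ := by
  have hr' : ‖r‖ < 1 := by rwa [Real.norm_eq_abs]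
  have hsg : Summable fun q : ℕ => r ^ q := summable_geometric_of_norm_lt_one hr'
  have hid : (fun q : ℕ => (if 1 ≤ q then r ^ q else 0 : ℝ))
      = fun q => r ^ q - (if q = 0 then (1:ℝ) else 0) := by
    funext q
    match q with
    | 0 => simp
    | (k+1) => simp
  have h1 : (1:ℝ) - r ≠ 0 := by
    have h2 := abs_lt.1 hr
    intro h; linarith [h2.2]
  rw [hid, Summable.tsum_sub hsg ((hasSum_ite_eq 0 (1:ℝ)).summable),
    tsum_geometric_of_norm_lt_one hr', (hasSum_ite_eq 0 (1:ℝ)).tsum_eq]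
  field_simp
  ring

/-! ### Product of sums over a pi type -/

set_option maxHeartbeats 1000000 in
lemma pi_summable_tsum :
    ∀ (N : ℕ) (h : Fin N → ℕ → ℝ), (∀ j, Summable fun q => ‖h j q‖) →
      (Summable fun κ : Fin N → ℕ => ‖∏ j, h j (κ j)‖) ∧
        (∑' κ : Fin N → ℕ, ∏ j, h j (κ j)) = ∏ j, ∑' q, h j q := by
  intro N
  induction N with
  | zero =>
    intro h _
    refine ⟨(hasSum_fintype _).summable, ?_⟩
    rw [tsum_fintype]
    simp
  | succ N ih =>
    intro h hs
    obtain ⟨ihS, ihT⟩ := ih (fun j q => h j.succ q) (fun j => hs j.succ)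
    set e : (ℕ × (Fin N → ℕ)) ≃ (Fin (N+1) → ℕ) := Fin.consEquiv (fun _ => ℕ) with he
    have key : ∀ p : ℕ × (Fin N → ℕ),
        (∏ j, h j ((e p) j)) = h 0 p.1 * ∏ j : Fin N, h j.succ (p.2 j) := by
      intro p
      rw [Fin.prod_univ_succ]
      simp [he, Fin.consEquiv]
    have hs0 : Summable fun q : ℕ => ‖(fun q => ‖h 0 q‖) q‖ := by
      simpa [norm_norm] using hs 0
    have ihS' : Summable fun κ : Fin N → ℕ =>
        ‖(fun κ : Fin N → ℕ => ‖∏ j : Fin N, h j.succ (κ j)‖) κ‖ := by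
      simpa [norm_norm] using ihS
    have hSnorm : Summable fun p : ℕ × (Fin N → ℕ) =>
        ‖h 0 p.1‖ * ‖∏ j : Fin N, h j.succ (p.2 j)‖ :=
      summable_mul_of_summable_norm (f := fun q : ℕ => ‖h 0 q‖)
        (g := fun κ : Fin N → ℕ => ‖∏ j : Fin N, h j.succ (κ j)‖) hs0 ihS'
    have hcomp : Summable ((fun κ : Fin (N+1) → ℕ => ‖∏ j, h j (κ j)‖) ∘ e) := by
      refine hSnorm.congr fun p => ?_
      simp only [Function.comp_apply, key p, norm_mul]
    refine ⟨e.summable_iff.1 hcomp, ?_⟩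
    rw [← e.tsum_eq]
    calc ∑' p : ℕ × (Fin N → ℕ), ∏ j, h j ((e p) j)
        = ∑' p : ℕ × (Fin N → ℕ), h 0 p.1 * ∏ j : Fin N, h j.succ (p.2 j) :=
          tsum_congr fun p => key p
      _ = (∑' q, h 0 q) * ∑' κ : Fin N → ℕ, ∏ j : Fin N, h j.succ (κ j) :=
          (tsum_mul_tsum_of_summable_norm (hs 0) ihS).symm
      _ = ∏ j : Fin (N+1), ∑' q, h j q := by
          rw [ihT, Fin.prod_univ_succ]

/-! ### Reindexing a sum over all tuples by total degree -/

def tupleEquiv (n : ℕ) :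
    (Σ k : ℕ, {κ : Fin n → ℕ // κ ∈ Finset.Nat.antidiagonalTuple n k}) ≃ (Fin n → ℕ) where
  toFun x := x.2.1
  invFun κ := ⟨∑ j, κ j, ⟨κ, Finset.Nat.mem_antidiagonalTuple.2 rfl⟩⟩
  left_inv := by
    rintro ⟨k, κ, hκ⟩
    obtain rfl := Finset.Nat.mem_antidiagonalTuple.1 hκ
    rfl
  right_inv κ := rfl

lemma sum_antidiagonal_tsum {n : ℕ} {G : (Fin n → ℕ) → ℝ} (hG : Summable G) :
    (Summable fun k => ∑ κ ∈ Finset.Nat.antidiagonalTuple n k, G κ) ∧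
      ∑' k, ∑ κ ∈ Finset.Nat.antidiagonalTuple n k, G κ = ∑' κ, G κ := by
  have hG' : Summable (G ∘ (tupleEquiv n)) := (tupleEquiv n).summable_iff.2 hG
  have hfin : ∀ k : ℕ,
      (∑' κ : {κ : Fin n → ℕ // κ ∈ Finset.Nat.antidiagonalTuple n k}, G κ.1)
        = ∑ κ ∈ Finset.Nat.antidiagonalTuple n k, G κ := fun k =>
    Finset.tsum_subtype _ _
  constructor
  · refine (hG'.sigma).congr fun k => ?_
    exact (tsum_congr fun c => rfl).trans (hfin k)
  · have h2 := Summable.tsum_sigma'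
      (f := fun x : (Σ k : ℕ, {κ : Fin n → ℕ // κ ∈ Finset.Nat.antidiagonalTuple n k}) =>
        G ((tupleEquiv n) x))
      (fun k => (hasSum_fintype _).summable) hG'
    calc ∑' k, ∑ κ ∈ Finset.Nat.antidiagonalTuple n k, G κ
        = ∑' k, ∑' κ : {κ : Fin n → ℕ // κ ∈ Finset.Nat.antidiagonalTuple n k}, G κ.1 :=
          tsum_congr fun k => (hfin k).symm
      _ = ∑' k, ∑' κ : {κ : Fin n → ℕ // κ ∈ Finset.Nat.antidiagonalTuple n k},
            G ((tupleEquiv n) ⟨k, κ⟩) :=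
          tsum_congr fun k => tsum_congr fun κ => rfl
      _ = ∑' x : (Σ k : ℕ, {κ : Fin n → ℕ // κ ∈ Finset.Nat.antidiagonalTuple n k}),
            G ((tupleEquiv n) x) := h2.symm
      _ = ∑' κ, G κ := (tupleEquiv n).tsum_eq G

/-! ### The key algebraic identities -/

lemma keyC {m : ℕ} (νf : Fin (m+1) → ℝ) {s : ℝ} (hs : 0 < s)
    (b : Fin (m+1) → ℝ) (κ : Fin (m+1) → ℕ) :
    (∏ j, b j ^ κ j) * s ^ (-(1 + ∑ j, (κ j : ℝ) * νf j))
      = s⁻¹ * ∏ j, (b j * (s ^ νf j)⁻¹) ^ κ j := by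
  have h1 : ∀ j : Fin (m+1), ((s ^ νf j)⁻¹) ^ κ j = s ^ (-((κ j : ℝ) * νf j)) := by
    intro j
    rw [inv_pow, ← Real.rpow_natCast (s ^ νf j) (κ j), ← Real.rpow_mul hs.le,
      ← Real.rpow_neg hs.le]
    congr 1
    ring
  have h2 : ∏ j, (b j * (s ^ νf j)⁻¹) ^ κ j
      = (∏ j, b j ^ κ j) * ∏ j, s ^ (-((κ j : ℝ) * νf j)) := by
    rw [← Finset.prod_mul_distrib]
    exact Finset.prod_congr rfl fun j _ => by rw [mul_pow, h1 j]
  have h3 : ∏ j, s ^ (-((κ j : ℝ) * νf j)) = s ^ (-(∑ j, (κ j : ℝ) * νf j)) := by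
    rw [← Real.rpow_sum_of_pos hs]
    congr 1
    rw [Finset.sum_neg_distrib]
  have h4 : s ^ (-(1 + ∑ j, (κ j : ℝ) * νf j))
      = s⁻¹ * s ^ (-(∑ j, (κ j : ℝ) * νf j)) := by
    rw [neg_add, Real.rpow_add hs, Real.rpow_neg_one]
  rw [h2, h3, h4]
  ring

lemma keyC_signed {m : ℕ} (νf lamf : Fin (m+1) → ℝ) {s : ℝ} (hs : 0 < s)
    {k : ℕ} {κ : Fin (m+1) → ℕ} (hκ : ∑ j, κ j = k) :
    (-1:ℝ)^k * ((∏ j, lamf j ^ κ j) * s ^ (-(1 + ∑ j, (κ j : ℝ) * νf j)))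
      = s⁻¹ * ∏ j, (-lamf j * (s ^ νf j)⁻¹) ^ κ j := by
  have h1 : ∏ j, (-lamf j * (s ^ νf j)⁻¹) ^ κ j
      = (-1:ℝ)^k * ∏ j, (lamf j * (s ^ νf j)⁻¹) ^ κ j := by
    rw [← hκ, ← Finset.prod_pow_eq_pow_sum, ← Finset.prod_mul_distrib]
    refine Finset.prod_congr rfl fun j _ => ?_
    rw [← mul_pow]
    congr 1
    ring
  rw [keyC νf hs lamf κ, h1]
  ring

/-! ### Summing over `Lambda` -/

lemma keyB (m : ℕ) (w : Fin (m+1) → ℝ) (hw : ∀ j, |w j| < 1) :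
    (Summable fun k => ∑ κ ∈ Lambda (m+1) k, ∏ j, w j ^ κ j) ∧
      ∑' k, (∑ κ ∈ Lambda (m+1) k, ∏ j, w j ^ κ j)
        = (1 - w 0)⁻¹ * ∏ j : Fin m, w j.succ * (1 - w j.succ)⁻¹ := by
  set h : Fin (m+1) → ℕ → ℝ :=
    fun j q => if 1 ≤ j.val then (if 1 ≤ q then w j ^ q else 0) else w j ^ q with hh
  have hnorm : ∀ j, Summable fun q => ‖h j q‖ := by
    intro j
    by_cases hj : 1 ≤ j.val
    · simp only [hh, hj, if_true]
      exact summable_norm_geom_tail (hw j)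
    · simp only [hh, hj, if_false]
      exact summable_norm_geom (hw j)
  obtain ⟨hS, hT⟩ := pi_summable_tsum (m+1) h hnorm
  have hGsum : Summable fun κ : Fin (m+1) → ℕ => ∏ j, h j (κ j) := hS.of_norm
  have hkey : ∀ k, ∑ κ ∈ Lambda (m+1) k, ∏ j, w j ^ κ j
      = ∑ κ ∈ Finset.Nat.antidiagonalTuple (m+1) k, ∏ j, h j (κ j) := by
    intro k
    rw [Lambda, Finset.sum_filter]
    refine Finset.sum_congr rfl fun κ _ => ?_
    by_cases hp : ∀ j : Fin (m+1), 1 ≤ j.val → 1 ≤ κ j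
    · rw [if_pos hp]
      refine Finset.prod_congr rfl fun j _ => ?_
      by_cases hj : 1 ≤ j.val
      · simp [hh, hj, hp j hj]
      · simp [hh, hj]
    · rw [if_neg hp]
      push_neg at hp
      obtain ⟨j0, hj0, hj0'⟩ := hp
      refine (Finset.prod_eq_zero (Finset.mem_univ j0) ?_).symm
      have hz : κ j0 = 0 := by omega
      simp [hh, hj0, hz]
  obtain ⟨hS2, hT2⟩ := sum_antidiagonal_tsum hGsum
  constructor
  · exact hS2.congr fun k => (hkey k).symm
  · calc ∑' k, ∑ κ ∈ Lambda (m+1) k, ∏ j, w j ^ κ j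
        = ∑' k, ∑ κ ∈ Finset.Nat.antidiagonalTuple (m+1) k, ∏ j, h j (κ j) :=
          tsum_congr hkey
      _ = ∑' κ : Fin (m+1) → ℕ, ∏ j, h j (κ j) := hT2
      _ = ∏ j, ∑' q, h j q := hT
      _ = (1 - w 0)⁻¹ * ∏ j : Fin m, w j.succ * (1 - w j.succ)⁻¹ := by
          rw [Fin.prod_univ_succ]
          congr 1
          · have h0 : h 0 = fun q => w 0 ^ q := by
              funext q; simp [hh]
            rw [h0, tsum_geometric_of_norm_lt_one (by rw [Real.norm_eq_abs]; exact hw 0)]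
          · refine Finset.prod_congr rfl fun j _ => ?_
            have hj : h j.succ = fun q => if 1 ≤ q then w j.succ ^ q else 0 := by
              funext q
              simp [hh, Fin.val_succ]
            rw [hj, tsum_geom_tail (hw j.succ)]

lemma step2 (m : ℕ) (νf lamf : Fin (m+1) → ℝ) {s : ℝ} (hs : 0 < s)
    (hlam : ∀ j, |lamf j| < s ^ νf j) :
    (Summable fun k : ℕ => ∑ κ ∈ Lambda (m+1) k,
        (∏ j, |lamf j| ^ κ j) * s ^ (-(1 + ∑ j, (κ j : ℝ) * νf j))) ∧
    ∑' k : ℕ, ((-1:ℝ)^k * ∑ κ ∈ Lambda (m+1) k,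
        (∏ j, lamf j ^ κ j) * s ^ (-(1 + ∑ j, (κ j : ℝ) * νf j)))
      = s⁻¹ * ((1 - (-lamf 0 * (s ^ νf 0)⁻¹))⁻¹ *
          ∏ j : Fin m, (-lamf j.succ * (s ^ νf j.succ)⁻¹) *
            (1 - (-lamf j.succ * (s ^ νf j.succ)⁻¹))⁻¹) := by
  have hsp : ∀ j : Fin (m+1), (0:ℝ) < s ^ νf j := fun j => Real.rpow_pos_of_pos hs _
  have hw : ∀ j : Fin (m+1), |(-lamf j * (s ^ νf j)⁻¹)| < 1 := by
    intro j
    have habs : |(-lamf j * (s ^ νf j)⁻¹)| = |lamf j| / s ^ νf j := by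
      rw [abs_mul, abs_neg, abs_inv, abs_of_pos (hsp j), div_eq_mul_inv]
    rw [habs, div_lt_one (hsp j)]
    exact hlam j
  have hwabs : ∀ j : Fin (m+1), |(|lamf j| * (s ^ νf j)⁻¹)| < 1 := by
    intro j
    have h := hw j
    rw [abs_mul, abs_neg] at h
    rwa [abs_mul, abs_abs]
  obtain ⟨hSabs, _⟩ := keyB m (fun j => |lamf j| * (s ^ νf j)⁻¹) hwabs
  obtain ⟨hSw, hTw⟩ := keyB m (fun j => -lamf j * (s ^ νf j)⁻¹) hw
  constructor
  · have heq : ∀ k : ℕ, ∑ κ ∈ Lambda (m+1) k,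
        (∏ j, |lamf j| ^ κ j) * s ^ (-(1 + ∑ j, (κ j : ℝ) * νf j))
          = s⁻¹ * ∑ κ ∈ Lambda (m+1) k, ∏ j, (|lamf j| * (s ^ νf j)⁻¹) ^ κ j := by
      intro k
      rw [Finset.mul_sum]
      exact Finset.sum_congr rfl fun κ _ => keyC νf hs (fun j => |lamf j|) κ
    refine ((hSabs.mul_left s⁻¹).congr fun k => ?_)
    exact (heq k).symm
  · have heq : ∀ k : ℕ, (-1:ℝ)^k * ∑ κ ∈ Lambda (m+1) k,
        (∏ j, lamf j ^ κ j) * s ^ (-(1 + ∑ j, (κ j : ℝ) * νf j))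
          = s⁻¹ * ∑ κ ∈ Lambda (m+1) k, ∏ j, (-lamf j * (s ^ νf j)⁻¹) ^ κ j := by
      intro k
      rw [Finset.mul_sum, Finset.mul_sum]
      refine Finset.sum_congr rfl fun κ hκ => ?_
      have hmem : ∑ j, κ j = k := by
        have := (Finset.mem_filter.1 hκ).1
        exact Finset.Nat.mem_antidiagonalTuple.1 this
      exact keyC_signed νf lamf hs hmem
    rw [tsum_congr heq, tsum_mul_left, hTw]

end MLaux

namespace MLaux

open MeasureTheory Set

/-! ### The per-`k` integrand -/

noncomputable def mlTerm (m : ℕ) (νf lamf : Fin (m+1) → ℝ) (κ : Fin (m+1) → ℕ)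
    (t : ℝ) : ℝ :=
  (t ^ (∑ j, (κ j : ℝ) * νf j) * ∏ j, lamf j ^ κ j)
    / Real.Gamma (1 + ∑ j, (κ j : ℝ) * νf j)

noncomputable def mlG (m : ℕ) (νf lamf : Fin (m+1) → ℝ) (s : ℝ) (k : ℕ) (t : ℝ) : ℝ :=
  Real.exp (-(s * t)) * ((-1:ℝ)^k * ∑ κ ∈ Lambda (m+1) k, mlTerm m νf lamf κ t)

lemma mlA_nonneg (m : ℕ) (νf : Fin (m+1) → ℝ) (hν : ∀ j, 0 < νf j)
    (κ : Fin (m+1) → ℕ) : 0 ≤ ∑ j, (κ j : ℝ) * νf j :=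
  Finset.sum_nonneg fun j _ => mul_nonneg (Nat.cast_nonneg _) (hν j).le

lemma mlTerm_eq (m : ℕ) (νf lamf : Fin (m+1) → ℝ) (s : ℝ) (κ : Fin (m+1) → ℕ) :
    (fun t => Real.exp (-(s * t)) * mlTerm m νf lamf κ t)
      = fun t => ((∏ j, lamf j ^ κ j) / Real.Gamma (1 + ∑ j, (κ j : ℝ) * νf j)) *
          (Real.exp (-(s * t)) * t ^ (∑ j, (κ j : ℝ) * νf j)) := by
  funext t
  simp only [mlTerm]
  ring

lemma mlTerm_integrable {m : ℕ} {νf lamf : Fin (m+1) → ℝ} {s : ℝ}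
    (hν : ∀ j, 0 < νf j) (hs : 0 < s) (κ : Fin (m+1) → ℕ) :
    IntegrableOn (fun t => Real.exp (-(s * t)) * mlTerm m νf lamf κ t) (Set.Ioi 0) := by
  rw [mlTerm_eq]
  exact (integrableOn_exp_rpow hs (mlA_nonneg m νf hν κ)).const_mul _

lemma mlTerm_integral {m : ℕ} {νf lamf : Fin (m+1) → ℝ} {s : ℝ}
    (hν : ∀ j, 0 < νf j) (hs : 0 < s) (κ : Fin (m+1) → ℕ) :
    ∫ t in Set.Ioi (0:ℝ), Real.exp (-(s * t)) * mlTerm m νf lamf κ t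
      = (∏ j, lamf j ^ κ j) * s ^ (-(1 + ∑ j, (κ j : ℝ) * νf j)) := by
  rw [mlTerm_eq, MeasureTheory.integral_const_mul,
    integral_exp_rpow hs (mlA_nonneg m νf hν κ)]
  have hΓ : Real.Gamma (1 + ∑ j, (κ j : ℝ) * νf j) ≠ 0 := by
    have := mlA_nonneg m νf hν κ
    exact (Real.Gamma_pos_of_pos (by linarith)).ne'
  field_simp

lemma mlTerm_norm {m : ℕ} {νf lamf : Fin (m+1) → ℝ} {s : ℝ}
    (hν : ∀ j, 0 < νf j) (κ : Fin (m+1) → ℕ) {t : ℝ} (ht : 0 < t) :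
    ‖Real.exp (-(s * t)) * mlTerm m νf lamf κ t‖
      = Real.exp (-(s * t)) * mlTerm m νf (fun j => |lamf j|) κ t := by
  have ha := mlA_nonneg m νf hν κ
  have hΓ : (0:ℝ) < Real.Gamma (1 + ∑ j, (κ j : ℝ) * νf j) :=
    Real.Gamma_pos_of_pos (by linarith)
  have hrp : (0:ℝ) ≤ t ^ (∑ j, (κ j : ℝ) * νf j) := Real.rpow_nonneg ht.le _
  simp only [mlTerm, Real.norm_eq_abs, abs_mul, abs_div,
    abs_of_pos (Real.exp_pos (-(s * t))), abs_of_pos hΓ, abs_of_nonneg hrp,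
    Finset.abs_prod, abs_pow]

lemma mlG_eq_sum (m : ℕ) (νf lamf : Fin (m+1) → ℝ) (s : ℝ) (k : ℕ) :
    mlG m νf lamf s k = fun t => ∑ κ ∈ Lambda (m+1) k,
      (-1:ℝ)^k * (Real.exp (-(s * t)) * mlTerm m νf lamf κ t) := by
  funext t
  simp only [mlG, Finset.mul_sum]
  exact Finset.sum_congr rfl fun κ _ => by ring

lemma mlG_integrable {m : ℕ} {νf lamf : Fin (m+1) → ℝ} {s : ℝ}
    (hν : ∀ j, 0 < νf j) (hs : 0 < s) (k : ℕ) :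
    Integrable (mlG m νf lamf s k) (volume.restrict (Set.Ioi 0)) := by
  rw [mlG_eq_sum]
  exact integrable_finset_sum _ fun κ _ => (mlTerm_integrable hν hs κ).const_mul _

lemma mlG_integral {m : ℕ} {νf lamf : Fin (m+1) → ℝ} {s : ℝ}
    (hν : ∀ j, 0 < νf j) (hs : 0 < s) (k : ℕ) :
    ∫ t in Set.Ioi (0:ℝ), mlG m νf lamf s k t
      = (-1:ℝ)^k * ∑ κ ∈ Lambda (m+1) k,
          (∏ j, lamf j ^ κ j) * s ^ (-(1 + ∑ j, (κ j : ℝ) * νf j)) := by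
  rw [mlG_eq_sum,
    MeasureTheory.integral_finset_sum _
      (fun κ _ => (mlTerm_integrable hν hs κ).const_mul _),
    Finset.mul_sum]
  exact Finset.sum_congr rfl fun κ _ => by
    rw [MeasureTheory.integral_const_mul, mlTerm_integral hν hs κ]

lemma mlG_norm_integral_le {m : ℕ} {νf lamf : Fin (m+1) → ℝ} {s : ℝ}
    (hν : ∀ j, 0 < νf j) (hs : 0 < s) (k : ℕ) :
    ∫ t in Set.Ioi (0:ℝ), ‖mlG m νf lamf s k t‖
      ≤ ∑ κ ∈ Lambda (m+1) k,
          (∏ j, |lamf j| ^ κ j) * s ^ (-(1 + ∑ j, (κ j : ℝ) * νf j)) := by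
  have hbound_int : IntegrableOn
      (fun t => ∑ κ ∈ Lambda (m+1) k,
        Real.exp (-(s * t)) * mlTerm m νf (fun j => |lamf j|) κ t) (Set.Ioi 0) :=
    integrable_finset_sum _ fun κ _ => mlTerm_integrable hν hs κ
  have h1 : ∫ t in Set.Ioi (0:ℝ), ‖mlG m νf lamf s k t‖
      ≤ ∫ t in Set.Ioi (0:ℝ), ∑ κ ∈ Lambda (m+1) k,
          Real.exp (-(s * t)) * mlTerm m νf (fun j => |lamf j|) κ t := by
    refine MeasureTheory.integral_mono_ae ((mlG_integrable hν hs k).norm) hbound_int ?_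
    refine MeasureTheory.ae_restrict_of_forall_mem measurableSet_Ioi fun t ht => ?_
    have ht0 : (0:ℝ) < t := ht
    simp only [mlG_eq_sum]
    refine (norm_sum_le _ _).trans ?_
    refine Finset.sum_le_sum fun κ _ => ?_
    rw [norm_mul, norm_pow, norm_neg, norm_one, one_pow, one_mul,
      mlTerm_norm hν κ ht0]
  refine h1.trans_eq ?_
  rw [MeasureTheory.integral_finset_sum _ (fun κ _ => mlTerm_integrable hν hs κ)]
  exact Finset.sum_congr rfl fun κ _ => mlTerm_integral hν hs κ


lemma frac_one_sub {a c : ℝ} (hc : c ≠ 0) : 1 - (-a * c⁻¹) = (a + c) * c⁻¹ := by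
  rw [neg_mul, sub_neg_eq_add, add_mul, mul_inv_cancel₀ hc]
  ring

lemma frac_head {a c : ℝ} (hc : 0 < c) : (1 - (-a * c⁻¹))⁻¹ = c * (a + c)⁻¹ := by
  rw [frac_one_sub hc.ne', mul_inv, inv_inv]
  ring

lemma frac_helper {a c : ℝ} (hc : 0 < c) :
    -a * c⁻¹ * (1 - -a * c⁻¹)⁻¹ = -a * (a + c)⁻¹ := by
  rw [frac_head hc]
  calc -a * c⁻¹ * (c * (a + c)⁻¹) = -a * (a + c)⁻¹ * (c⁻¹ * c) := by ring
    _ = -a * (a + c)⁻¹ := by rw [inv_mul_cancel₀ hc.ne', mul_one]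

lemma prod_Icc_one_eq (f : ℕ → ℝ) : ∀ N : ℕ,
    ∏ j ∈ Finset.Icc 1 N, f j = ∏ j ∈ Finset.range N, f (j + 1)
  | 0 => by simp
  | (N+1) => by
    rw [Finset.prod_Icc_succ_top (by omega) f, prod_Icc_one_eq f N,
      Finset.prod_range_succ]

/-! ### The analytic main lemma -/

theorem main_aux (m : ℕ) (νf lamf : Fin (m+1) → ℝ) (hν : ∀ j, 0 < νf j)
    (s : ℝ) (hs : 0 < s) (hlam : ∀ j, |lamf j| < s ^ νf j) :
    ∫ t in Set.Ioi (0:ℝ), Real.exp (-(s * t)) * (∑' k : ℕ, (-1:ℝ)^k *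
        ∑ κ ∈ Lambda (m+1) k,
          (t ^ (∑ j, (κ j : ℝ) * νf j) * ∏ j, lamf j ^ κ j)
            / Real.Gamma (1 + ∑ j, (κ j : ℝ) * νf j))
      = s⁻¹ * ((1 - (-lamf 0 * (s ^ νf 0)⁻¹))⁻¹ *
          ∏ j : Fin m, (-lamf j.succ * (s ^ νf j.succ)⁻¹) *
            (1 - (-lamf j.succ * (s ^ νf j.succ)⁻¹))⁻¹) := by
  obtain ⟨hBsum, hTval⟩ := step2 m νf lamf hs hlam
  have hsum : Summable fun k => ∫ t in Set.Ioi (0:ℝ), ‖mlG m νf lamf s k t‖ :=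
    Summable.of_nonneg_of_le
      (fun k => integral_nonneg fun t => norm_nonneg _)
      (fun k => mlG_norm_integral_le hν hs k) hBsum
  have hswap := MeasureTheory.integral_tsum_of_summable_integral_norm
      (F := mlG m νf lamf s) (μ := volume.restrict (Set.Ioi 0))
      (fun k => mlG_integrable hν hs k) hsum
  have hpt : ∀ t : ℝ, Real.exp (-(s * t)) * (∑' k : ℕ, (-1:ℝ)^k *
      ∑ κ ∈ Lambda (m+1) k,
        (t ^ (∑ j, (κ j : ℝ) * νf j) * ∏ j, lamf j ^ κ j)
          / Real.Gamma (1 + ∑ j, (κ j : ℝ) * νf j))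
      = ∑' k : ℕ, mlG m νf lamf s k t := by
    intro t
    rw [← tsum_mul_left]
    exact tsum_congr fun k => rfl
  rw [MeasureTheory.setIntegral_congr_fun measurableSet_Ioi
    (fun t (_ : t ∈ Set.Ioi (0:ℝ)) => hpt t), ← hswap, tsum_congr (fun k => mlG_integral hν hs k)]
  exact hTval

end MLaux

open MLaux MeasureTheory Set in
/-- The density of the convolution of `n` independent Mittag-Leffler random variables
of orders `ν_1 = 1, ν_2, …, ν_n` and rates `λ_1, …, λ_{n−1}, λ_n = 1` has Laplace
transform `∏_{j=1}^{n−1} λ_j / ∏_{j=1}^n (λ_j + s^{ν_j})`.  (Since `ν_1 = 1` and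
`λ_n = 1`, the exponent `k_1 + ∑_{j=2}^n k_j ν_j` equals `∑_{j=1}^n k_j ν_j` and the
product `∏_{j=1}^{n−1} λ_j^{k_j}` equals `∏_{j=1}^n λ_j^{k_j}`.) -/
theorem convolution_mittagLeffler_birth_laplace (n : ℕ) (hn : 1 ≤ n)
    (ν : ℕ → ℝ) (hν1 : ν 1 = 1) (hν : ∀ j, 2 ≤ j → j ≤ n → 0 < ν j ∧ ν j ≤ 1)
    (lam : ℕ → ℝ) (hlam : ∀ j, 1 ≤ j → j ≤ n - 1 → 0 < lam j) (hlamn : lam n = 1) :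
    ∀ s : ℝ, 0 < s → lam 1 < s →
      (∀ j, 2 ≤ j → j ≤ n - 1 → lam j < s ^ ν j) → 1 < s ^ ν n →
      ∫ t in Set.Ioi (0:ℝ),
          Real.exp (-(s * t)) *
            ((-1 : ℝ) ^ (n - 1) * lam 1 * ∑' k : ℕ, (-1 : ℝ) ^ k *
              ∑ κ ∈ Lambda n k,
                (t ^ (∑ j, (κ j : ℝ) * ν (j.val + 1)) *
                    ∏ j, lam (j.val + 1) ^ (κ j))
                  / Real.Gamma (1 + ∑ j, (κ j : ℝ) * ν (j.val + 1)))
        = (∏ j ∈ Finset.Icc 1 (n - 1), lam j)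
            / ∏ j ∈ Finset.Icc 1 n, (lam j + s ^ ν j) := by
  intro s hs hs1 hsmid hsn
  obtain ⟨m, rfl⟩ : ∃ m, n = m + 1 := ⟨n - 1, (Nat.succ_pred_eq_of_pos hn).symm⟩
  simp only [Nat.add_sub_cancel] at hlam hsmid ⊢
  -- positivity of the exponents
  have hνpos : ∀ j : Fin (m+1), 0 < ν (j.val + 1) := by
    intro j
    have hjlt := j.isLt
    rcases Nat.eq_zero_or_pos j.val with h0 | h1
    · rw [h0, zero_add, hν1]; norm_num
    · exact (hν (j.val + 1) (by omega) (by omega)).1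
  -- the rates are dominated by the Laplace variable
  have hlamabs : ∀ j : Fin (m+1), |lam (j.val + 1)| < s ^ ν (j.val + 1) := by
    intro j
    have hjlt := j.isLt
    rcases Nat.eq_zero_or_pos j.val with h0 | hpos
    · rw [h0, zero_add, hν1, Real.rpow_one]
      rcases Nat.eq_zero_or_pos m with hm | hm
      · subst hm
        have hl1 : lam 1 = 1 := hlamn
        have hsn' : 1 < s := by
          rwa [hν1, Real.rpow_one] at hsn
        rw [hl1, abs_one]
        exact hsn'
      · have hpos1 : 0 < lam 1 := hlam 1 le_rfl (by omega)
        rw [abs_of_pos hpos1]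
        exact hs1
    · by_cases htop : j.val + 1 = m + 1
      · rw [htop, hlamn, abs_one]
        exact hsn
      · have h2 : 2 ≤ j.val + 1 := by omega
        have hle : j.val + 1 ≤ m := by omega
        have hposl := hlam (j.val + 1) (by omega) hle
        rw [abs_of_pos hposl]
        exact hsmid (j.val + 1) h2 hle
  have hmain := main_aux m (fun j => ν (j.val + 1)) (fun j => lam (j.val + 1))
    hνpos s hs hlamabs
  -- pull out the constant factor
  have hsp : ∀ j : Fin (m+1), (0:ℝ) < s ^ ν (j.val + 1) :=
    fun j => Real.rpow_pos_of_pos hs _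
  have hD : ∀ j : Fin (m+1), (0:ℝ) < lam (j.val + 1) + s ^ ν (j.val + 1) := by
    intro j
    have h := abs_lt.1 (hlamabs j)
    linarith [h.1]
  trans (((-1:ℝ)^m * lam 1) * ∫ t in Set.Ioi (0:ℝ), Real.exp (-(s * t)) *
      (∑' k : ℕ, (-1:ℝ)^k * ∑ κ ∈ Lambda (m+1) k,
        (t ^ (∑ j, (κ j : ℝ) * ν (j.val + 1)) * ∏ j, lam (j.val + 1) ^ (κ j))
          / Real.Gamma (1 + ∑ j, (κ j : ℝ) * ν (j.val + 1))))
  · rw [← MeasureTheory.integral_const_mul]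
    exact MeasureTheory.setIntegral_congr_fun measurableSet_Ioi fun t _ => by ring
  · rw [hmain]
    -- now a purely algebraic computation
    -- normalize the `Fin` indices
    simp only [Fin.val_succ, Fin.val_zero, zero_add]
    rw [hν1, Real.rpow_one]
    have h0' := hlamabs 0
    simp only [Fin.val_zero, zero_add, hν1, Real.rpow_one] at h0'
    have h1pos : (0:ℝ) < lam 1 + s := by
      have h := abs_lt.1 h0'
      linarith [h.1]
    have hDpos : ∀ j : Fin m, (0:ℝ) < lam (j.val + 1 + 1) + s ^ ν (j.val + 1 + 1) := by
      intro j
      have h := hD j.succ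
      simpa [Fin.val_succ] using h
    rw [frac_head hs]
    rw [Finset.prod_congr rfl (fun (j : Fin m) _ =>
      frac_helper (a := lam (j.val + 1 + 1)) (Real.rpow_pos_of_pos hs (ν (j.val + 1 + 1))))]
    have hsplit : (∏ j : Fin m,
          -lam (j.val + 1 + 1) * (lam (j.val + 1 + 1) + s ^ ν (j.val + 1 + 1))⁻¹)
        = (-1:ℝ)^m * ((∏ j : Fin m, lam (j.val + 1 + 1)) *
            (∏ j : Fin m, (lam (j.val + 1 + 1) + s ^ ν (j.val + 1 + 1)))⁻¹) := by
      rw [← Finset.prod_inv_distrib, ← Finset.prod_mul_distrib]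
      calc ∏ j : Fin m, -lam (j.val + 1 + 1) * (lam (j.val + 1 + 1) + s ^ ν (j.val + 1 + 1))⁻¹
          = ∏ j : Fin m, (-1:ℝ) *
              (lam (j.val + 1 + 1) * (lam (j.val + 1 + 1) + s ^ ν (j.val + 1 + 1))⁻¹) :=
            Finset.prod_congr rfl fun j _ => by ring
        _ = (-1:ℝ)^m * ∏ j : Fin m,
              lam (j.val + 1 + 1) * (lam (j.val + 1 + 1) + s ^ ν (j.val + 1 + 1))⁻¹ := by
            rw [Finset.prod_mul_distrib, Finset.prod_const, Finset.card_univ, Fintype.card_fin]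
    rw [hsplit]
    -- identify numerator and denominator
    have hPl : ∏ j ∈ Finset.Icc 1 m, lam j = lam 1 * ∏ j : Fin m, lam (j.val + 1 + 1) := by
      have h1 : ∏ j ∈ Finset.Icc 1 (m+1), lam j = ∏ j : Fin (m+1), lam (j.val + 1) := by
        rw [prod_Icc_one_eq, ← Fin.prod_univ_eq_prod_range (fun i => lam (i+1)) (m+1)]
      have h2 : ∏ j ∈ Finset.Icc 1 (m+1), lam j
          = (∏ j ∈ Finset.Icc 1 m, lam j) * lam (m+1) :=
        Finset.prod_Icc_succ_top (by omega) lam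
      have h3 : ∏ j : Fin (m+1), lam (j.val + 1)
          = lam 1 * ∏ j : Fin m, lam (j.val + 1 + 1) := by
        rw [Fin.prod_univ_succ]
        simp [Fin.val_succ]
      rw [hlamn, mul_one] at h2
      rw [← h2, h1, h3]
    have hPD : ∏ j ∈ Finset.Icc 1 (m+1), (lam j + s ^ ν j)
        = (lam 1 + s) * ∏ j : Fin m, (lam (j.val + 1 + 1) + s ^ ν (j.val + 1 + 1)) := by
      rw [prod_Icc_one_eq, ← Fin.prod_univ_eq_prod_range
        (fun i => lam (i+1) + s ^ ν (i+1)) (m+1), Fin.prod_univ_succ]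
      simp [Fin.val_succ, hν1, Real.rpow_one]
    rw [hPl, hPD]
    have hPDpos : (0:ℝ) < ∏ j : Fin m, (lam (j.val + 1 + 1) + s ^ ν (j.val + 1 + 1)) :=
      Finset.prod_pos fun j _ => hDpos j
    have hsq : ((-1:ℝ)^m) * ((-1:ℝ)^m) = 1 := by
      rw [← mul_pow]; norm_num
    rw [div_eq_mul_inv, mul_inv]
    calc (-1:ℝ)^m * lam 1 * (s⁻¹ * (s * (lam 1 + s)⁻¹ *
          ((-1:ℝ)^m * ((∏ j : Fin m, lam (j.val + 1 + 1)) *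
            (∏ j : Fin m, (lam (j.val + 1 + 1) + s ^ ν (j.val + 1 + 1)))⁻¹))))
        = ((-1:ℝ)^m * (-1:ℝ)^m) * ((s⁻¹ * s) *
            (lam 1 * (∏ j : Fin m, lam (j.val + 1 + 1)) *
              ((lam 1 + s)⁻¹ * (∏ j : Fin m, (lam (j.val + 1 + 1) + s ^ ν (j.val + 1 + 1)))⁻¹))) := by
          ring
      _ = lam 1 * (∏ j : Fin m, lam (j.val + 1 + 1)) *
            ((lam 1 + s)⁻¹ * (∏ j : Fin m, (lam (j.val + 1 + 1) + s ^ ν (j.val + 1 + 1)))⁻¹) := by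
          rw [hsq, inv_mul_cancel₀ hs.ne', one_mul, one_mul]
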